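/- The function φ(u,s) = (√(1 − u + s²) + s)/(1 − u), defined on the open set {(u,s) ∈ ℝ² : u < 1 and 1 − u + s² > 0}, satisfies the projective PDE (∗): φ₂₂ = 2(φ₁ − s·φ₁₂). -/

import Mathlib

/-- First partial derivative of `f = f(u,s)` with respect to `u`. -/
noncomputable def pd1 (f : ℝ → ℝ → ℝ) (u s : ℝ) : ℝ := deriv (fun t => f t s) u

/-- First partial derivative of `f = f(u,s)` with respect to `s`. -/
noncomputable def pd2 (f : ℝ → ℝ → ℝ) (u s : ℝ) : ℝ := deriv (f u) s

/-- The defining function of a Randers metric in navigation form. -/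
noncomputable def phi (u s : ℝ) : ℝ := (Real.sqrt (1 - u + s ^ 2) + s) / (1 - u)

noncomputable def g2 (u s : ℝ) : ℝ :=
  (s / Real.sqrt (1 - u + s ^ 2) + 1) / (1 - u)

noncomputable def g1 (u s : ℝ) : ℝ :=
  (-(1 / (2 * Real.sqrt (1 - u + s ^ 2))) * (1 - u) -
    (Real.sqrt (1 - u + s ^ 2) + s) * (-1)) / (1 - u) ^ 2

lemma sqrtA_pos {u s : ℝ} (h : 0 < 1 - u + s ^ 2) : 0 < Real.sqrt (1 - u + s ^ 2) :=
  Real.sqrt_pos.mpr h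

lemma sqrt_hasDerivAt_s (u s : ℝ) (h : 0 < 1 - u + s ^ 2) :
    HasDerivAt (fun x => Real.sqrt (1 - u + x ^ 2))
      (s / Real.sqrt (1 - u + s ^ 2)) s := by
  have hinner : HasDerivAt (fun x : ℝ => 1 - u + x ^ 2) (2 * s) s := by
    simpa using (hasDerivAt_pow 2 s).const_add (1 - u)
  have H := (Real.hasDerivAt_sqrt h.ne').comp s hinner
  refine H.congr_deriv ?_
  have hs := (sqrtA_pos h).ne'
  field_simp

lemma sqrt_hasDerivAt_u (u s : ℝ) (h : 0 < 1 - u + s ^ 2) :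
    HasDerivAt (fun t => Real.sqrt (1 - t + s ^ 2))
      (-(1 / (2 * Real.sqrt (1 - u + s ^ 2)))) u := by
  have hinner : HasDerivAt (fun t : ℝ => 1 - t + s ^ 2) (-1) u := by
    simpa using ((hasDerivAt_id u).const_sub 1).add_const (s ^ 2)
  have H := (Real.hasDerivAt_sqrt h.ne').comp u hinner
  refine H.congr_deriv ?_
  ring

lemma pd2_phi_eq {u s : ℝ} (hu : u < 1) (h : 0 < 1 - u + s ^ 2) :
    pd2 phi u s = g2 u s := by
  have H : HasDerivAt (fun x => (Real.sqrt (1 - u + x ^ 2) + x) / (1 - u))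
      ((s / Real.sqrt (1 - u + s ^ 2) + 1) / (1 - u)) s :=
    ((sqrt_hasDerivAt_s u s h).add (hasDerivAt_id s)).div_const (1 - u)
  exact H.deriv

lemma pd1_phi_eq {u s : ℝ} (hu : u < 1) (h : 0 < 1 - u + s ^ 2) :
    pd1 phi u s = g1 u s := by
  have hu' : (1 : ℝ) - u ≠ 0 := by linarith
  have hden : HasDerivAt (fun t : ℝ => 1 - t) (-1 : ℝ) u := by
    simpa using (hasDerivAt_id u).const_sub 1
  have H : HasDerivAt (fun t => (Real.sqrt (1 - t + s ^ 2) + s) / (1 - t))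
      (g1 u s) u :=
    ((sqrt_hasDerivAt_u u s h).add_const s).div hden hu'
  exact H.deriv

lemma nhds_mem {u s : ℝ} (h : 0 < 1 - u + s ^ 2) :
    {x : ℝ | 0 < 1 - u + x ^ 2} ∈ nhds s := by
  have : IsOpen {x : ℝ | 0 < 1 - u + x ^ 2} :=
    isOpen_lt continuous_const (by continuity)
  exact this.mem_nhds h

theorem stmt_1 : ∀ u s : ℝ, u < 1 → 0 < 1 - u + s ^ 2 →
    pd2 (pd2 phi) u s = 2 * (pd1 phi u s - s * pd2 (pd1 phi) u s) := by
  intro u s hu h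
  have hu' : (1 : ℝ) - u ≠ 0 := by linarith
  set R := Real.sqrt (1 - u + s ^ 2) with hRdef
  have hR : 0 < R := sqrtA_pos h
  have hR2 : R ^ 2 = 1 - u + s ^ 2 := Real.sq_sqrt h.le
  -- second derivative in s
  have e2 : pd2 (pd2 phi) u s = deriv (g2 u) s := by
    apply Filter.EventuallyEq.deriv_eq
    filter_upwards [nhds_mem h] with x hx
    exact pd2_phi_eq hu hx
  have Hg2 : HasDerivAt (fun x => (x / Real.sqrt (1 - u + x ^ 2) + 1) / (1 - u))
      (((1 * R - s * (s / R)) / R ^ 2) / (1 - u)) s := by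
    exact (((hasDerivAt_id s).div (sqrt_hasDerivAt_s u s h) hR.ne').add_const 1).div_const (1 - u)
  have e2' : deriv (g2 u) s = ((1 * R - s * (s / R)) / R ^ 2) / (1 - u) := by
    have : deriv (g2 u) s = deriv (fun x => (x / Real.sqrt (1 - u + x ^ 2) + 1) / (1 - u)) s := by
      apply Filter.EventuallyEq.deriv_eq
      filter_upwards with x
      simp [g2]
    rw [this, Hg2.deriv]
  -- mixed derivative
  have e12 : pd2 (pd1 phi) u s = deriv (g1 u) s := by
    apply Filter.EventuallyEq.deriv_eq
    filter_upwards [nhds_mem h] with x hx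
    exact pd1_phi_eq hu hx
  have Hinv : HasDerivAt (fun x => 1 / (2 * Real.sqrt (1 - u + x ^ 2)))
      ((0 * (2 * R) - 1 * (2 * (s / R))) / (2 * R) ^ 2) s :=
    (hasDerivAt_const s 1).div ((sqrt_hasDerivAt_s u s h).const_mul 2)
      (by positivity)
  have Hg1 : HasDerivAt (fun x => (-(1 / (2 * Real.sqrt (1 - u + x ^ 2))) * (1 - u) -
      (Real.sqrt (1 - u + x ^ 2) + x) * (-1)) / (1 - u) ^ 2)
      ((-(((0 * (2 * R) - 1 * (2 * (s / R))) / (2 * R) ^ 2)) * (1 - u) -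
        (s / R + 1) * (-1)) / (1 - u) ^ 2) s := by
    exact ((Hinv.neg.mul_const (1 - u)).sub
      (((sqrt_hasDerivAt_s u s h).add (hasDerivAt_id s)).mul_const (-1))).div_const ((1 - u) ^ 2)
  have e12' : deriv (g1 u) s = (-(((0 * (2 * R) - 1 * (2 * (s / R))) / (2 * R) ^ 2)) * (1 - u) -
      (s / R + 1) * (-1)) / (1 - u) ^ 2 := by
    have : deriv (g1 u) s = deriv (fun x => (-(1 / (2 * Real.sqrt (1 - u + x ^ 2))) * (1 - u) -
        (Real.sqrt (1 - u + x ^ 2) + x) * (-1)) / (1 - u) ^ 2) s := by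
      apply Filter.EventuallyEq.deriv_eq
      filter_upwards with x
      simp [g1]
    rw [this, Hg1.deriv]
  rw [e2, e2', e12, e12', pd1_phi_eq hu h]
  unfold g1
  rw [← hRdef]
  field_simp
  linear_combination (-2 * R ^ 2) * hR2
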